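/- Let n ≥ 2 be an integer. The set of real solutions (x₁, x₂, c) of the Einstein system for D(n+1,n) is exactly the four-element set {(1, 1, 0), (−1, −1, 0), (√2·n/√(2n²+2n+1), √2·(n+1)/√(2n²+2n+1), −√2·(2n+1)/(8n·√(2n²+2n+1))), (−√2·n/√(2n²+2n+1), −√2·(n+1)/√(2n²+2n+1), √2·(2n+1)/(8n·√(2n²+2n+1)))}. -/

import Mathlib

/-- For n ≥ 2, the set of real solutions (x₁, x₂, c) of the Einstein system for
D(n+1,n) is exactly the stated four-element set. -/
theorem einstein_Dn1n_solutions (n : ℕ) (hn : 2 ≤ n) :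
    ∀ x₁ x₂ c : ℝ,
      ((1/4) * (x₁^2 - 1) = c * x₁ ∧
       (1/4) * (x₂^2 - 1) = -((n : ℝ) / ((n : ℝ) + 1)) * c * x₂ ∧
       ((2 * (n : ℝ) + 1) / (8 * (n : ℝ))) * (x₁ - x₂) = c)
      ↔ ((x₁, x₂, c) = (1, 1, 0) ∨ (x₁, x₂, c) = (-1, -1, 0) ∨
         (x₁, x₂, c) =
          (Real.sqrt 2 * (n : ℝ) / Real.sqrt (2 * (n : ℝ)^2 + 2 * (n : ℝ) + 1),
           Real.sqrt 2 * ((n : ℝ) + 1) / Real.sqrt (2 * (n : ℝ)^2 + 2 * (n : ℝ) + 1),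
           -(Real.sqrt 2 * (2 * (n : ℝ) + 1)
              / (8 * (n : ℝ) * Real.sqrt (2 * (n : ℝ)^2 + 2 * (n : ℝ) + 1)))) ∨
         (x₁, x₂, c) =
          (-(Real.sqrt 2 * (n : ℝ) / Real.sqrt (2 * (n : ℝ)^2 + 2 * (n : ℝ) + 1)),
           -(Real.sqrt 2 * ((n : ℝ) + 1) / Real.sqrt (2 * (n : ℝ)^2 + 2 * (n : ℝ) + 1)),
           Real.sqrt 2 * (2 * (n : ℝ) + 1)
              / (8 * (n : ℝ) * Real.sqrt (2 * (n : ℝ)^2 + 2 * (n : ℝ) + 1)))) := by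
  intro x₁ x₂ c
  have hN2 : (2:ℝ) ≤ (n:ℝ) := by exact_mod_cast hn
  have hN0' : (0:ℝ) < (n:ℝ) := by linarith
  have hN0 : (n:ℝ) ≠ 0 := ne_of_gt hN0'
  have hN1 : (n:ℝ) + 1 ≠ 0 := by linarith
  have hD : (0:ℝ) < 2*(n:ℝ)^2 + 2*(n:ℝ) + 1 := by positivity
  set s := Real.sqrt (2 * (n : ℝ)^2 + 2 * (n : ℝ) + 1) with hs_def
  have hs0 : 0 < s := Real.sqrt_pos.mpr hD
  have hs2 : s^2 = 2*(n:ℝ)^2 + 2*(n:ℝ) + 1 := Real.sq_sqrt hD.le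
  set t := Real.sqrt 2 with ht_def
  have ht0 : 0 < t := Real.sqrt_pos.mpr (by norm_num)
  have ht2 : t^2 = 2 := Real.sq_sqrt (by norm_num)
  constructor
  · rintro ⟨h1, h2, h3⟩
    have hc : c * (8*(n:ℝ)) = (2*(n:ℝ)+1) * (x₁ - x₂) := by
      field_simp at h3
      linarith
    have hc2 : ((n:ℝ)+1)*(x₂^2-1) + 4*(n:ℝ)*(c*x₂) = 0 := by
      field_simp at h2
      linarith
    have hA : x₁^2 - (2*(n:ℝ)+1)*(x₁*x₂) + 2*(n:ℝ) = 0 := by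
      linear_combination (-(8*(n:ℝ)))*h1 - x₁*hc
    have hB : x₂^2 + (2*(n:ℝ)+1)*(x₁*x₂) - 2*(n:ℝ) - 2 = 0 := by
      linear_combination 2*hc2 - x₂*hc
    have key : (x₁*x₂ - 1) * (2*(2*(n:ℝ)^2+2*(n:ℝ)+1)*(x₁*x₂) - (4*(n:ℝ)^2+4*(n:ℝ))) = 0 := by
      linear_combination x₁^2*hB + (2*(n:ℝ)+2-(2*(n:ℝ)+1)*(x₁*x₂))*hA
    rcases mul_eq_zero.mp key with hp | hp
    · have hx1 : (x₁ - 1)*(x₁ + 1) = 0 := by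
        linear_combination hA + (2*(n:ℝ)+1)*hp
      rcases mul_eq_zero.mp hx1 with h | h
      · have e1 : x₁ = 1 := by linarith
        have e2 : x₂ = 1 := by
          rw [e1] at hp; linarith
        have e3 : c = 0 := by
          rw [e1, e2] at hc
          field_simp at hc
          exact (mul_eq_zero.mp (by linear_combination hc : c * (8*(n:ℝ)) = 0)).resolve_right (by positivity)
        left
        rw [Prod.mk.injEq, Prod.mk.injEq]
        exact ⟨e1, e2, e3⟩
      · have e1 : x₁ = -1 := by linarith
        have e2 : x₂ = -1 := by
          rw [e1] at hp; linarith
        have e3 : c = 0 := by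
          rw [e1, e2] at hc
          field_simp at hc
          exact (mul_eq_zero.mp (by linear_combination hc : c * (8*(n:ℝ)) = 0)).resolve_right (by positivity)
        right; left
        rw [Prod.mk.injEq, Prod.mk.injEq]
        exact ⟨e1, e2, e3⟩
    · have hx1sq : (2*(n:ℝ)^2+2*(n:ℝ)+1) * x₁^2 = 2*(n:ℝ)^2 := by
        linear_combination (2*(n:ℝ)^2+2*(n:ℝ)+1)*hA + ((2*(n:ℝ)+1)/2)*hp
      have hfac : (s*x₁ - t*(n:ℝ)) * (s*x₁ + t*(n:ℝ)) = 0 := by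
        linear_combination x₁^2*hs2 - (n:ℝ)^2*ht2 + hx1sq
      rcases mul_eq_zero.mp hfac with h | h
      · have hsx1 : s*x₁ = t*(n:ℝ) := by linarith
        have hsx2 : s*x₂ = t*((n:ℝ)+1) := by
          have h1' : (t*(n:ℝ)) * (s*x₂) = (t*(n:ℝ)) * (t*((n:ℝ)+1)) := by
            linear_combination (-(s*x₂))*hsx1 + (x₁*x₂)*hs2 + (1/2)*hp + (-((n:ℝ)*((n:ℝ)+1)))*ht2
          exact mul_left_cancel₀ (by positivity) h1'
        have hcv : c * (8*(n:ℝ)*s) = -(t*(2*(n:ℝ)+1)) := by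
          linear_combination s*hc + (2*(n:ℝ)+1)*hsx1 - (2*(n:ℝ)+1)*hsx2
        right; right; left
        rw [Prod.mk.injEq, Prod.mk.injEq]
        refine ⟨?_, ?_, ?_⟩
        · rw [eq_div_iff hs0.ne']; linear_combination hsx1
        · rw [eq_div_iff hs0.ne']; linear_combination hsx2
        · have h8 : (8*(n:ℝ)*s) ≠ 0 := by positivity
          rw [← neg_div, eq_div_iff h8]; linear_combination hcv
      · have hsx1 : s*x₁ = -(t*(n:ℝ)) := by linarith
        have hsx2 : s*x₂ = -(t*((n:ℝ)+1)) := by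
          have h1' : (t*(n:ℝ)) * (s*x₂) = (t*(n:ℝ)) * (-(t*((n:ℝ)+1))) := by
            linear_combination (s*x₂)*hsx1 - (x₁*x₂)*hs2 - (1/2)*hp + ((n:ℝ)*((n:ℝ)+1))*ht2
          exact mul_left_cancel₀ (by positivity) h1'
        have hcv : c * (8*(n:ℝ)*s) = t*(2*(n:ℝ)+1) := by
          linear_combination s*hc + (2*(n:ℝ)+1)*hsx1 - (2*(n:ℝ)+1)*hsx2
        right; right; right
        rw [Prod.mk.injEq, Prod.mk.injEq]
        refine ⟨?_, ?_, ?_⟩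
        · rw [eq_comm, neg_eq_iff_eq_neg, eq_comm, eq_div_iff hs0.ne']
          linear_combination -hsx1
        · rw [eq_comm, neg_eq_iff_eq_neg, eq_comm, eq_div_iff hs0.ne']
          linear_combination -hsx2
        · have h8 : (8*(n:ℝ)*s) ≠ 0 := by positivity
          rw [eq_div_iff h8]; linear_combination hcv
  · rintro (h | h | h | h) <;>
      rw [Prod.mk.injEq, Prod.mk.injEq] at h <;>
      obtain ⟨e1, e2, e3⟩ := h <;> subst e1 <;> subst e2 <;> subst e3
    · refine ⟨by norm_num, by norm_num, by norm_num⟩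
    · refine ⟨by norm_num, by norm_num, by norm_num⟩
    · refine ⟨?_, ?_, ?_⟩
      · field_simp
        linear_combination (8*(n:ℝ)^2+8*(n:ℝ)+4)*ht2 - 8*hs2
      · field_simp
        linear_combination (8*(n:ℝ)^2+8*(n:ℝ)+4)*ht2 - 8*hs2
      · field_simp
        linear_combination 0*hs2
    · refine ⟨?_, ?_, ?_⟩
      · field_simp
        linear_combination (8*(n:ℝ)^2+8*(n:ℝ)+4)*ht2 - 8*hs2
      · field_simp
        linear_combination (8*(n:ℝ)^2+8*(n:ℝ)+4)*ht2 - 8*hs2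
      · field_simp
        linear_combination 0*hs2
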